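/- There exist infinitely many non-equivalent monotone games over L5; that is, there is a sequence H_0, H_1, H_2, … of monotone games over L5 such that for all m ≠ n, H_m is not equivalent to H_n. -/

import Mathlib

universe u

/-- Combinatorial games over a poset `A` of atoms: either an atomic game `[a]` for an atom
`a : A`, or a composite game `⟨L|R⟩` where `L` and `R` are nonempty families of games
(the left and right options). -/
inductive PoGame (A : Type u) : Type (u + 1) where
  | atom : A → PoGame A
  | mk : (xl xr : Type u) → (xl → PoGame A) → (xr → PoGame A) →
      Nonempty xl → Nonempty xr → PoGame A

/-- The type of pre-games (normal-play combinatorial games), as in the older Mathlib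
(removed from the current Mathlib; restored here with its old definition). -/
inductive SetTheory.PGame : Type (u + 1)
  | mk : ∀ α β : Type u, (α → SetTheory.PGame) → (β → SetTheory.PGame) → SetTheory.PGame

/-- The pre-game `0 = { | }`, as in the older Mathlib. -/
instance SetTheory.PGame.instZeroPGame : Zero SetTheory.PGame :=
  ⟨⟨PEmpty, PEmpty, PEmpty.elim, PEmpty.elim⟩⟩

namespace PoGame

variable {A : Type u}

/-- `G` is an atomic game. -/
def IsAtomic : PoGame A → Prop
  | atom _ => True
  | mk _ _ _ _ _ _ => False

/-- `G` is a left option of the game given as second argument. -/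
def IsLeftOption (G : PoGame A) : PoGame A → Prop
  | atom _ => False
  | mk _ _ L _ _ _ => ∃ i, L i = G

/-- `G` is a right option of the game given as second argument. -/
def IsRightOption (G : PoGame A) : PoGame A → Prop
  | atom _ => False
  | mk _ _ _ R _ _ => ∃ j, R j = G

section Order

variable [PartialOrder A]

mutual
  /-- `Le G H` is the relation `G ≤ H` on games over the poset `A`, defined by mutual
  recursion with `Lf` (the relation `G ⊲ H`): `G ≤ H` iff every left option `G^L`
  satisfies `G^L ⊲ H`, every right option `H^R` satisfies `G ⊲ H^R`, and if `G` or `H`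
  is atomic then `G ⊲ H`. -/
  inductive Le : PoGame A → PoGame A → Prop
    | intro (G H : PoGame A)
        (hL : ∀ G', IsLeftOption G' G → Lf G' H)
        (hR : ∀ H', IsRightOption H' H → Lf G H')
        (hA : IsAtomic G ∨ IsAtomic H → Lf G H) : Le G H

  /-- `Lf G H` is the relation `G ⊲ H` on games over the poset `A`: it holds iff some
  right option `G^R` satisfies `G^R ≤ H`, or some left option `H^L` satisfies `G ≤ H^L`,
  or `G = [a]` and `H = [b]` are atomic with `a ≤ b` in `A`. -/
  inductive Lf : PoGame A → PoGame A → Prop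
    | rightOption (G H G' : PoGame A) (h : IsRightOption G' G) (hle : Le G' H) : Lf G H
    | leftOption (G H H' : PoGame A) (h : IsLeftOption H' H) (hle : Le G H') : Lf G H
    | atom (a b : A) (hab : a ≤ b) : Lf (atom a) (atom b)
end

/-- Two games are equivalent if `G ≤ H` and `H ≤ G`. -/
def GEquiv (G H : PoGame A) : Prop := Le G H ∧ Le H G

/-- `G` is locally monotone if `G ≤ G^L` for every left option `G^L` and `G^R ≤ G` for
every right option `G^R`. -/
def LocallyMonotone (G : PoGame A) : Prop :=
  (∀ G', IsLeftOption G' G → Le G G') ∧ (∀ G', IsRightOption G' G → Le G' G)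

/-- `G` is an option (left or right) of `H`. -/
def IsOption (G H : PoGame A) : Prop := IsLeftOption G H ∨ IsRightOption G H

/-- `G` is a position of `H`: `H` itself, an option of `H`, an option of an option, etc. -/
def IsPosition (G H : PoGame A) : Prop := Relation.ReflTransGen IsOption G H

/-- `G` is monotone if every position of `G` is locally monotone. -/
def Monotone (G : PoGame A) : Prop := ∀ K, IsPosition K G → LocallyMonotone K

end Order

/-- The 5-element linearly ordered set `L5 = {-3, -2, -1, 0, 1}`. -/
abbrev L5 : Type := {a : ℤ // -3 ≤ a ∧ a ≤ 1}

/-- `G` has mean `C`: an atomic game `[a]` has mean `a`, and a composite game has mean `C`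
iff every left option has mean `C + 1` and every right option has mean `C - 1`. -/
def HasMean : PoGame L5 → ℤ → Prop
  | atom a, C => (a : ℤ) = C
  | mk _ _ L R _ _, C => (∀ i, HasMean (L i) (C + 1)) ∧ (∀ j, HasMean (R j) (C - 1))

/-- The game `⟨G | H⟩` with a single left option `G` and a single right option `H`. -/
def ofPair (G H : PoGame A) : PoGame A :=
  mk PUnit PUnit (fun _ => G) (fun _ => H) ⟨PUnit.unit⟩ ⟨PUnit.unit⟩

/-- `⋆ = ⟨-1 | -3⟩`. -/
def star : PoGame L5 := ofPair (atom ⟨-1, by norm_num⟩) (atom ⟨-3, by norm_num⟩)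

/-- `M(G) = ⟨1 | G⟩`. -/
def M (G : PoGame L5) : PoGame L5 := ofPair (atom ⟨1, by norm_num⟩) G

/-- `P(G) = ⟨G | -2⟩`. -/
def P (G : PoGame L5) : PoGame L5 := ofPair G (atom ⟨-2, by norm_num⟩)

/-- `P⋆(G) = ⟨G | ⋆⟩`. -/
def Pstar (G : PoGame L5) : PoGame L5 := ofPair G star

/-- `Pn n G = P G` if `n` is odd, `P⋆ G` if `n` is even. -/
def Pn (n : ℕ) (G : PoGame L5) : PoGame L5 := if Odd n then P G else Pstar G

/-- The sequence `G_0 = [0]`, `G_{n+1} = M (Pn n (G_n))`. -/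
def Gseq : ℕ → PoGame L5
  | 0 => atom ⟨0, by norm_num⟩
  | n + 1 => M (Pn n (Gseq n))

/-- The normal-play game obtained from a game over `L5` by replacing every atom by the
normal-play game `0 = { | }`, keeping the tree of left and right options. -/
def np : PoGame L5 → SetTheory.PGame.{0}
  | atom _ => 0
  | mk xl xr L R _ _ => SetTheory.PGame.mk xl xr (fun i => np (L i)) (fun j => np (R j))

end PoGame


namespace PoGame

universe v
set_option linter.unusedSectionVars false

variable {A : Type v} [PartialOrder A]

/-! ### Basic option and inversion lemmas -/

lemma isLeftOption_ofPair {K X Y : PoGame A} : IsLeftOption K (ofPair X Y) ↔ K = X := by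
  simp [ofPair, IsLeftOption, eq_comm]

lemma isRightOption_ofPair {K X Y : PoGame A} : IsRightOption K (ofPair X Y) ↔ K = Y := by
  simp [ofPair, IsRightOption, eq_comm]

lemma not_isLeftOption_atom {K : PoGame A} {a : A} : ¬ IsLeftOption K (atom a) := by
  simp [IsLeftOption]

lemma not_isRightOption_atom {K : PoGame A} {a : A} : ¬ IsRightOption K (atom a) := by
  simp [IsRightOption]

lemma not_isAtomic_ofPair {X Y : PoGame A} : ¬ IsAtomic (ofPair X Y) := by
  simp [IsAtomic, ofPair]

lemma ofPair_ne_atom {X Y : PoGame A} {a : A} : ofPair X Y ≠ atom a := by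
  simp [ofPair]

lemma isLeftOption_pair_self {X Y : PoGame A} : IsLeftOption X (ofPair X Y) :=
  isLeftOption_ofPair.mpr rfl

lemma isRightOption_pair_self {X Y : PoGame A} : IsRightOption Y (ofPair X Y) :=
  isRightOption_ofPair.mpr rfl

lemma le_cases' {G H : PoGame A} (h : Le G H) :
    (∀ G', IsLeftOption G' G → Lf G' H) ∧ (∀ H', IsRightOption H' H → Lf G H') ∧
      (IsAtomic G ∨ IsAtomic H → Lf G H) := by
  cases h with
  | intro _ _ hL hR hA => exact ⟨hL, hR, hA⟩

lemma lf_cases' {G H : PoGame A} (h : Lf G H) :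
    (∃ G', IsRightOption G' G ∧ Le G' H) ∨ (∃ H', IsLeftOption H' H ∧ Le G H') ∨
      (∃ a b : A, a ≤ b ∧ G = atom a ∧ H = atom b) := by
  cases h with
  | rightOption _ _ G' hro hle => exact Or.inl ⟨G', hro, hle⟩
  | leftOption _ _ H' hlo hle => exact Or.inr (Or.inl ⟨H', hlo, hle⟩)
  | atom a b hab => exact Or.inr (Or.inr ⟨a, b, hab, rfl, rfl⟩)

/-! ### Builders -/

lemma lf_of_right {X Y H : PoGame A} (h : Le Y H) : Lf (ofPair X Y) H :=
  Lf.rightOption _ _ _ isRightOption_pair_self h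

lemma lf_of_left {G X Y : PoGame A} (h : Le G X) : Lf G (ofPair X Y) :=
  Lf.leftOption _ _ _ isLeftOption_pair_self h

lemma lf_atom_atom {a b : A} (h : a ≤ b) : Lf (atom a) (atom b) := Lf.atom a b h

lemma le_atom_atom {a b : A} (h : a ≤ b) : Le (atom a) (atom b) :=
  Le.intro _ _ (fun _ h' => absurd h' not_isLeftOption_atom)
    (fun _ h' => absurd h' not_isRightOption_atom) (fun _ => Lf.atom a b h)

lemma le_pp {X Y X' Y' : PoGame A} (h1 : Lf X (ofPair X' Y'))
    (h2 : Lf (ofPair X Y) Y') : Le (ofPair X Y) (ofPair X' Y') :=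
  Le.intro _ _
    (fun G' hG' => by rw [isLeftOption_ofPair] at hG'; subst hG'; exact h1)
    (fun H' hH' => by rw [isRightOption_ofPair] at hH'; subst hH'; exact h2)
    (fun h => absurd h (by
      rintro (h | h) <;> exact not_isAtomic_ofPair h))

lemma le_pa {X Y : PoGame A} {b : A} (h1 : Lf X (atom b))
    (h3 : Lf (ofPair X Y) (atom b)) : Le (ofPair X Y) (atom b) :=
  Le.intro _ _
    (fun G' hG' => by rw [isLeftOption_ofPair] at hG'; subst hG'; exact h1)
    (fun _ h' => absurd h' not_isRightOption_atom)
    (fun _ => h3)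

lemma le_ap {a : A} {X' Y' : PoGame A} (h2 : Lf (atom a) Y')
    (h3 : Lf (atom a) (ofPair X' Y')) : Le (atom a) (ofPair X' Y') :=
  Le.intro _ _
    (fun _ h' => absurd h' not_isLeftOption_atom)
    (fun H' hH' => by rw [isRightOption_ofPair] at hH'; subst hH'; exact h2)
    (fun _ => h3)

/-! ### Elimination for atoms -/

lemma lf_atom_elim {a b : A} (h : Lf (atom a) (atom b)) : a ≤ b := by
  rcases lf_cases' h with ⟨G', hro, _⟩ | ⟨H', hlo, _⟩ | ⟨x, y, hxy, hG, hH⟩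
  · exact absurd hro not_isRightOption_atom
  · exact absurd hlo not_isLeftOption_atom
  · obtain rfl : a = x := atom.inj hG
    obtain rfl : b = y := atom.inj hH
    exact hxy

lemma le_atom_elim {a b : A} (h : Le (atom a) (atom b)) : a ≤ b :=
  lf_atom_elim ((le_cases' h).2.2 (Or.inl trivial))

/-! ### Concrete atoms of `L5` -/

def a1 : L5 := ⟨1, by norm_num⟩
def a0 : L5 := ⟨0, by norm_num⟩
def am1 : L5 := ⟨-1, by norm_num⟩
def am2 : L5 := ⟨-2, by norm_num⟩
def am3 : L5 := ⟨-3, by norm_num⟩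

lemma L5_le {x y : L5} : x ≤ y ↔ (x : ℤ) ≤ (y : ℤ) := Iff.rfl

/-- The "stopper" `s_k`: `[-2]` for odd `k`, `⋆` for even `k`. -/
def sk (k : ℕ) : PoGame L5 := if Odd k then atom am2 else star

/-- `B_k = Pn k (G_k)` as an `ofPair`. -/
def Bg (k : ℕ) : PoGame L5 := ofPair (Gseq k) (sk k)

lemma Pn_eq (k : ℕ) (X : PoGame L5) : Pn k X = ofPair X (sk k) := by
  by_cases h : Odd k <;> simp [Pn, sk, h, P, Pstar] <;> rfl

lemma Gsucc (n : ℕ) : Gseq (n + 1) = ofPair (atom a1) (Bg n) := by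
  show M (Pn n (Gseq n)) = _
  rw [Pn_eq]; rfl

lemma Gzero : Gseq 0 = atom a0 := rfl

/-! ### Positive comparison lemmas -/

lemma le_star_one : Le star (atom a1) :=
  le_pa (lf_atom_atom (by norm_num [L5_le, am1, a1]))
    (lf_of_right (le_atom_atom (by norm_num [L5_le, am3, a1])))

lemma le_star_zero : Le star (atom a0) :=
  le_pa (lf_atom_atom (by norm_num [L5_le, am1, a0]))
    (lf_of_right (le_atom_atom (by norm_num [L5_le, am3, a0])))

lemma le_star_m1 : Le star (atom am1) :=
  le_pa (lf_atom_atom (by norm_num [L5_le, am1]))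
    (lf_of_right (le_atom_atom (by norm_num [L5_le, am3, am1])))

lemma le_m3_star : Le (atom am3) star :=
  le_ap (lf_atom_atom (by norm_num [L5_le, am3]))
    (lf_of_left (le_atom_atom (by norm_num [L5_le, am3, am1])))

lemma lf_star_star : Lf star star := lf_of_right le_m3_star

lemma le_s_one (k : ℕ) : Le (sk k) (atom a1) := by
  by_cases h : Odd k <;> simp only [sk, h, if_true, if_false]
  · exact le_atom_atom (by norm_num [L5_le, am2, a1])
  · exact le_star_one

lemma le_s_zero (k : ℕ) : Le (sk k) (atom a0) := by
  by_cases h : Odd k <;> simp only [sk, h, if_true, if_false]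
  · exact le_atom_atom (by norm_num [L5_le, am2, a0])
  · exact le_star_zero

lemma lf_G_one : ∀ k, Lf (Gseq k) (atom a1)
  | 0 => lf_atom_atom (by norm_num [L5_le, a0, a1])
  | k + 1 => by
      rw [Gsucc]
      exact lf_of_right (le_pa (lf_G_one k) (lf_of_right (le_s_one k)))

lemma le_B_one (k : ℕ) : Le (Bg k) (atom a1) :=
  le_pa (lf_G_one k) (lf_of_right (le_s_one k))

lemma le_G_one : ∀ k, Le (Gseq k) (atom a1)
  | 0 => le_atom_atom (by norm_num [L5_le, a0, a1])
  | k + 1 => by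
      rw [Gsucc]
      exact le_pa (lf_atom_atom le_rfl) (lf_of_right (le_B_one k))

lemma lf_G_zero : ∀ k, Lf (Gseq k) (atom a0)
  | 0 => lf_atom_atom le_rfl
  | k + 1 => by
      rw [Gsucc]
      exact lf_of_right (le_pa (lf_G_zero k) (lf_of_right (le_s_zero k)))

lemma le_B_zero (k : ℕ) : Le (Bg k) (atom a0) :=
  le_pa (lf_G_zero k) (lf_of_right (le_s_zero k))

lemma le_m2_G : ∀ k, Le (atom am2) (Gseq k)
  | 0 => le_atom_atom (by norm_num [L5_le, am2, a0])
  | k + 1 => by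
      rw [Gsucc]
      refine le_ap ?_ (lf_of_left (le_atom_atom (by norm_num [L5_le, am2, a1])))
      exact lf_of_left (le_m2_G k)

lemma le_m1_G : ∀ k, Le (atom am1) (Gseq k)
  | 0 => le_atom_atom (by norm_num [L5_le, am1, a0])
  | k + 1 => by
      rw [Gsucc]
      refine le_ap ?_ (lf_of_left (le_atom_atom (by norm_num [L5_le, am1, a1])))
      exact lf_of_left (le_m1_G k)

lemma lf_G_G (k j : ℕ) : Lf (Gseq k) (Gseq j) := by
  cases j with
  | zero =>
      cases k with
      | zero => exact lf_atom_atom le_rfl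
      | succ k => rw [Gsucc]; exact lf_of_right (le_B_zero k)
  | succ j => rw [Gsucc j]; exact lf_of_left (le_G_one k)

lemma le_B_G (k : ℕ) : ∀ j, Le (Bg k) (Gseq j)
  | 0 => le_pa (lf_G_G k 0) (lf_of_right (le_s_zero k))
  | j + 1 => by
      have h := lf_G_G k (j + 1)
      rw [Gsucc j] at h
      rw [Gsucc j]
      exact le_pp h (lf_of_left (le_B_G k j))

lemma le_s_B (k : ℕ) : Le (sk k) (Bg k) := by
  by_cases h : Odd k
  · have hs : sk k = atom am2 := by simp [sk, h]
    rw [hs]; unfold Bg; rw [hs]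
    exact le_ap (lf_atom_atom le_rfl) (lf_of_left (le_m2_G k))
  · have hs : sk k = star := by simp [sk, h]
    rw [hs]; unfold Bg; rw [hs]
    show Le (ofPair (atom am1) (atom am3)) (ofPair (Gseq k) star)
    exact le_pp (lf_of_left (le_m1_G k))
      (show Lf star star from lf_star_star)

/-! ### Monotonicity -/

lemma locallyMonotone_atom (a : A) : LocallyMonotone (atom a) :=
  ⟨fun _ h => absurd h not_isLeftOption_atom, fun _ h => absurd h not_isRightOption_atom⟩

lemma monotone_atom (a : A) : PoGame.Monotone (atom a) := by
  intro K hK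
  rcases Relation.ReflTransGen.cases_tail hK with heq | ⟨c, _, hopt⟩
  · rw [← heq]; exact locallyMonotone_atom a
  · rcases hopt with h | h
    · exact absurd h not_isLeftOption_atom
    · exact absurd h not_isRightOption_atom

lemma monotone_ofPair {X Y : PoGame A} (hX : PoGame.Monotone X) (hY : PoGame.Monotone Y)
    (h1 : Le (ofPair X Y) X) (h2 : Le Y (ofPair X Y)) : PoGame.Monotone (ofPair X Y) := by
  intro K hK
  rcases Relation.ReflTransGen.cases_tail hK with heq | ⟨c, hc, hopt⟩
  · rw [← heq]
    constructor
    · intro G' hG'; rw [isLeftOption_ofPair] at hG'; subst hG'; exact h1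
    · intro G' hG'; rw [isRightOption_ofPair] at hG'; subst hG'; exact h2
  · rcases hopt with h | h
    · rw [isLeftOption_ofPair] at h; subst h; exact hX K hc
    · rw [isRightOption_ofPair] at h; subst h; exact hY K hc

lemma monotone_star : PoGame.Monotone star :=
  monotone_ofPair (monotone_atom am1) (monotone_atom am3) le_star_m1 le_m3_star

lemma monotone_s (k : ℕ) : PoGame.Monotone (sk k) := by
  by_cases h : Odd k <;> simp only [sk, h, if_true, if_false]
  · exact monotone_atom am2
  · exact monotone_star

lemma monotone_G : ∀ n, PoGame.Monotone (Gseq n)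
  | 0 => monotone_atom a0
  | n + 1 => by
      rw [Gsucc]
      refine monotone_ofPair (monotone_atom a1) ?_ ?_ ?_
      · exact monotone_ofPair (monotone_G n) (monotone_s n) (le_B_G n n) (le_s_B n)
      · rw [← Gsucc]; exact le_G_one (n + 1)
      · show Le (Bg n) _
        rw [← Gsucc]; exact le_B_G n (n + 1)

/-! ### Negative comparison lemmas -/

lemma not_lf_atom_atom {a b : A} (h : ¬ a ≤ b) : ¬ Lf (atom a) (atom b) :=
  fun hlf => h (lf_atom_elim hlf)

lemma not_le_star_m2 : ¬ Le star (atom am2) := by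
  intro h
  have := (le_cases' h).1 (atom am1) isLeftOption_pair_self
  exact not_lf_atom_atom (by norm_num [L5_le, am1, am2]) this

lemma not_le_m2_star : ¬ Le (atom am2) star := by
  intro h
  have := (le_cases' h).2.1 (atom am3) isRightOption_pair_self
  exact not_lf_atom_atom (by norm_num [L5_le, am2, am3]) this

lemma not_lf_G_m1 : ∀ n, ¬ Lf (Gseq n) (atom am1)
  | 0 => not_lf_atom_atom (by norm_num [L5_le, a0, am1])
  | n + 1 => by
      intro h
      rw [Gsucc] at h
      rcases lf_cases' h with ⟨G', hro, hle⟩ | ⟨H', hlo, _⟩ | ⟨x, y, _, hG, _⟩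
      · rw [isRightOption_ofPair] at hro; subst hro
        -- Le (Bg n) (atom am1) is impossible
        have := (le_cases' hle).1 (Gseq n) isLeftOption_pair_self
        exact not_lf_G_m1 n this
      · exact absurd hlo not_isLeftOption_atom
      · exact absurd hG ofPair_ne_atom

lemma not_le_B_m1 (n : ℕ) : ¬ Le (Bg n) (atom am1) := by
  intro h
  exact not_lf_G_m1 n ((le_cases' h).1 (Gseq n) isLeftOption_pair_self)

lemma not_lf_B_s_even (n : ℕ) (hn : ¬ Odd n) : ¬ Lf (Bg n) (atom am2) := by
  intro h
  have hs : sk n = star := by simp [sk, hn]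
  rcases lf_cases' h with ⟨G', hro, hle⟩ | ⟨H', hlo, _⟩ | ⟨x, y, _, hG, _⟩
  · rw [show Bg n = ofPair (Gseq n) star by rw [← hs]; rfl] at hro
    rw [isRightOption_ofPair] at hro; subst hro
    exact not_le_star_m2 hle
  · exact absurd hlo not_isLeftOption_atom
  · exact absurd hG ofPair_ne_atom

lemma not_lf_B_s_odd (n : ℕ) (hn : Odd n) : ¬ Lf (Bg n) star := by
  intro h
  have hs : sk n = atom am2 := by simp [sk, hn]
  rcases lf_cases' h with ⟨G', hro, hle⟩ | ⟨H', hlo, hle⟩ | ⟨x, y, _, hG, _⟩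
  · rw [show Bg n = ofPair (Gseq n) (atom am2) by rw [← hs]; rfl] at hro
    rw [isRightOption_ofPair] at hro; subst hro
    exact not_le_m2_star hle
  · rw [show star = ofPair (atom am1) (atom am3) from rfl, isLeftOption_ofPair] at hlo
    subst hlo
    exact not_le_B_m1 n hle
  · exact absurd hG ofPair_ne_atom

/-- The main negative lemma, proved by strong induction on `n + m`. -/
lemma neg_main : ∀ s n m : ℕ, n + m ≤ s →
    ((m < n → ¬ Le (Gseq n) (Gseq m)) ∧
     (m + 1 < n → ¬ Lf (Gseq n) (Bg m)) ∧
     (m < n → ¬ Le (Bg n) (Bg m))) := by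
  intro s
  induction s with
  | zero =>
      intro n m h
      exact ⟨fun h' => absurd h' (by omega), fun h' => absurd h' (by omega),
        fun h' => absurd h' (by omega)⟩
  | succ s IH =>
      have hN1 : ∀ n m, n + m ≤ s + 1 → m < n → ¬ Le (Gseq n) (Gseq m) := by
        intro n m hs hlt hle
        obtain ⟨hL, hR, _⟩ := le_cases' hle
        obtain ⟨n', rfl⟩ : ∃ n', n = n' + 1 := ⟨n - 1, by omega⟩
        cases m with
        | zero =>
            have := hL (atom a1) (by rw [Gsucc]; exact isLeftOption_pair_self)
            exact not_lf_atom_atom (by norm_num [L5_le, a1, a0]) this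
        | succ m' =>
            have := hR (Bg m') (by rw [Gsucc m']; exact isRightOption_pair_self)
            exact (IH (n' + 1) m' (by omega)).2.1 (by omega) this
      have hN2 : ∀ n m, n + m ≤ s + 1 → m + 1 < n → ¬ Lf (Gseq n) (Bg m) := by
        intro n m hs hlt hlf
        obtain ⟨n', rfl⟩ : ∃ n', n = n' + 1 := ⟨n - 1, by omega⟩
        rcases lf_cases' hlf with ⟨G', hro, hle⟩ | ⟨H', hlo, hle⟩ | ⟨x, y, _, hG, _⟩
        · rw [Gsucc, isRightOption_ofPair] at hro; subst hro
          exact (IH n' m (by omega)).2.2 (by omega) hle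
        · rw [show Bg m = ofPair (Gseq m) (sk m) from rfl, isLeftOption_ofPair] at hlo
          subst hlo
          exact hN1 (n' + 1) m hs (by omega) hle
        · rw [Gsucc] at hG; exact absurd hG ofPair_ne_atom
      have hN3 : ∀ n m, n + m ≤ s + 1 → m < n → ¬ Le (Bg n) (Bg m) := by
        intro n m hs hlt hle
        obtain ⟨hL, hR, _⟩ := le_cases' hle
        by_cases hc : m + 1 < n
        · have := hL (Gseq n) isLeftOption_pair_self
          exact hN2 n m hs hc this
        · obtain rfl : n = m + 1 := by omega
          have hlf := hR (sk m) isRightOption_pair_self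
          by_cases ho : Odd m
          · have hs' : sk m = atom am2 := by simp [sk, ho]
            rw [hs'] at hlf
            exact not_lf_B_s_even (m + 1) (by simp [Nat.odd_add_one, ho]) hlf
          · have hs' : sk m = star := by simp [sk, ho]
            rw [hs'] at hlf
            exact not_lf_B_s_odd (m + 1) (by simp [Nat.odd_add_one, ho]) hlf
      exact fun n m h => ⟨hN1 n m h, hN2 n m h, hN3 n m h⟩

lemma not_le_G_G {n m : ℕ} (h : m < n) : ¬ Le (Gseq n) (Gseq m) :=
  (neg_main (n + m) n m le_rfl).1 h

end PoGame

open PoGame in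
/-- There exist infinitely many non-equivalent monotone games over `L5`: a sequence of
monotone games that are pairwise non-equivalent. -/
theorem stmt_15 :
    ∃ H : ℕ → PoGame L5, (∀ n, PoGame.Monotone (H n)) ∧
      ∀ m n : ℕ, m ≠ n → ¬ GEquiv (H m) (H n) := by
  refine ⟨Gseq, monotone_G, fun m n hmn hequiv => ?_⟩
  rcases lt_or_gt_of_ne hmn with h | h
  · exact not_le_G_G h hequiv.2
  · exact not_le_G_G h hequiv.1
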